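/- Let K be a field, q ∈ K[x_1] nonconstant, and R_q = K[x_1]/⟨q⟩. Let f, g ∈ R_q[x_2,...,x_n] with f not in R_q and g not in R_q nor a unit multiple of an element of R_q^×, whose leading monomials lm(f), lm(g) (with respect to a monomial ordering on monomials in x_2,...,x_n) are relatively prime. With l_f, l_g ∈ K[x_1] the canonical lifts of lc(f), lc(g) (of degree < deg q), d = gcd(l_f, l_g), m_f = σ_q(lcm(l_f,l_g)/l_f), m_g = σ_q(lcm(l_f,l_g)/l_g), and S(f,g) := (m_f·x̃^γ/lm(f))·f − (m_g·x̃^γ/lm(g))·g with x̃^γ = lcm(lm(f),lm(g)), one has σ_q(d)·S(f,g) = f_1·lt(g) − g_1·lt(f) = f_1·g − g_1·f, where f_1 = f − lt(f) and g_1 = g − lt(g). -/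
import Mathlib


open MvPolynomial

/-- The leading monomial (exponent) of `f` with respect to the monomial order `m`,
taken over the coefficient ring. -/
noncomputable def mdeg {σ : Type*} (m : MonomialOrder σ) {R : Type*} [CommSemiring R]
    (f : MvPolynomial σ R) : σ →₀ ℕ :=
  m.toSyn.symm (f.support.sup fun d => m.toSyn d)

/-- The leading coefficient of `f` with respect to the monomial order `m`. -/
noncomputable def lC {σ : Type*} (m : MonomialOrder σ) {R : Type*} [CommSemiring R]
    (f : MvPolynomial σ R) : R :=
  f.coeff (mdeg m f)

/-- The leading term of `f` with respect to the monomial order `m`. -/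
noncomputable def lT {σ : Type*} (m : MonomialOrder σ) {R : Type*} [CommSemiring R]
    (f : MvPolynomial σ R) : MvPolynomial σ R :=
  monomial (mdeg m f) (lC m f)

/-- `d` is a greatest common divisor of `a` and `b` (gcd's are unique up to units). -/
def IsGcd {α : Type*} [CommMonoid α] (d a b : α) : Prop :=
  d ∣ a ∧ d ∣ b ∧ ∀ e, e ∣ a → e ∣ b → e ∣ d

/-- `l` is a least common multiple of `a` and `b` (lcm's are unique up to units). -/
def IsLcm {α : Type*} [CommMonoid α] (l a b : α) : Prop :=
  a ∣ l ∧ b ∣ l ∧ ∀ e, a ∣ e → b ∣ e → l ∣ e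

lemma lC_ne_zero {σ : Type*} (m : MonomialOrder σ) {R : Type*} [CommSemiring R]
    {f : MvPolynomial σ R} (hf : f ≠ 0) : lC m f ≠ 0 := by
  have hne : f.support.Nonempty := MvPolynomial.support_nonempty.mpr hf
  obtain ⟨b, hb, hb2⟩ := Finset.exists_mem_eq_sup f.support hne (fun d => m.toSyn d)
  have hmem : mdeg m f ∈ f.support := by
    unfold mdeg; rw [hb2]; simpa using hb
  exact MvPolynomial.mem_support_iff.mp hmem

/-- **Coprime leading monomials over a PQR.**  Over `R_q = K[x₁]/⟨q⟩`, for `f, g` not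
in `R_q` with relatively prime leading monomials, with canonical lifts `l_f, l_g` of the
leading coefficients, `d = gcd(l_f, l_g)`, `lcm(l_f,l_g) = l_f·u_f = l_g·u_g`, and
`S(f,g) = σ_q(u_f)·x̃^{lm g}·f − σ_q(u_g)·x̃^{lm f}·g`, one has
`σ_q(d)·S(f,g) = f₁·lt g − g₁·lt f = f₁·g − g₁·f`. -/
theorem coprime_lm_S_polynomial_PQR {σ K : Type*} [Field K] (mo : MonomialOrder σ)
    (q : Polynomial K) (hq : 0 < q.degree)
    (f g : MvPolynomial σ (Polynomial K ⧸ Ideal.span {q}))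
    (hf : f ∉ Set.range (C : (Polynomial K ⧸ Ideal.span {q}) →
      MvPolynomial σ (Polynomial K ⧸ Ideal.span {q})))
    (hg : g ∉ Set.range (C : (Polynomial K ⧸ Ideal.span {q}) →
      MvPolynomial σ (Polynomial K ⧸ Ideal.span {q})))
    (hcop : ∀ i, mdeg mo f i = 0 ∨ mdeg mo g i = 0)
    (lf lg : Polynomial K)
    (hlf : lf.degree < q.degree ∧ Ideal.Quotient.mk (Ideal.span {q}) lf = lC mo f)
    (hlg : lg.degree < q.degree ∧ Ideal.Quotient.mk (Ideal.span {q}) lg = lC mo g)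
    (d M uf ug : Polynomial K)
    (hd : IsGcd d lf lg) (hM : IsLcm M lf lg)
    (hdM : d * M = lf * lg)
    (huf : M = lf * uf) (hug : M = lg * ug) :
    C (Ideal.Quotient.mk (Ideal.span {q}) d) *
        (C (Ideal.Quotient.mk (Ideal.span {q}) uf) * monomial (mdeg mo g) 1 * f -
          C (Ideal.Quotient.mk (Ideal.span {q}) ug) * monomial (mdeg mo f) 1 * g) =
      (f - lT mo f) * lT mo g - (g - lT mo g) * lT mo f ∧
    C (Ideal.Quotient.mk (Ideal.span {q}) d) *
        (C (Ideal.Quotient.mk (Ideal.span {q}) uf) * monomial (mdeg mo g) 1 * f -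
          C (Ideal.Quotient.mk (Ideal.span {q}) ug) * monomial (mdeg mo f) 1 * g) =
      (f - lT mo f) * g - (g - lT mo g) * f := by
  set π := Ideal.Quotient.mk (Ideal.span {q}) with hπ
  have hf0 : f ≠ 0 := fun h => hf ⟨0, by simp [h]⟩
  have hg0 : g ≠ 0 := fun h => hg ⟨0, by simp [h]⟩
  have hlfne : lf ≠ 0 := by
    intro h
    exact lC_ne_zero mo hf0 (by rw [← hlf.2, h, map_zero])
  have hlgne : lg ≠ 0 := by
    intro h
    exact lC_ne_zero mo hg0 (by rw [← hlg.2, h, map_zero])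
  have hduf : d * uf = lg :=
    mul_left_cancel₀ hlfne (by rw [show lf * (d * uf) = d * (lf * uf) by ring, ← huf, hdM])
  have hdug : d * ug = lf :=
    mul_left_cancel₀ hlgne
      (by rw [show lg * (d * ug) = d * (lg * ug) by ring, ← hug, hdM]; ring)
  have e1 : C (π d) * C (π uf) = (C (lC mo g) : MvPolynomial σ (Polynomial K ⧸ Ideal.span {q})) := by
    rw [← map_mul, ← map_mul, hduf, hlg.2]
  have e2 : C (π d) * C (π ug) = (C (lC mo f) : MvPolynomial σ (Polynomial K ⧸ Ideal.span {q})) := by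
    rw [← map_mul, ← map_mul, hdug, hlf.2]
  have mf : lT mo f = C (lC mo f) * monomial (mdeg mo f) 1 := by
    rw [lT, C_mul_monomial, mul_one]
  have mg : lT mo g = C (lC mo g) * monomial (mdeg mo g) 1 := by
    rw [lT, C_mul_monomial, mul_one]
  have key : C (π d) *
      (C (π uf) * monomial (mdeg mo g) 1 * f - C (π ug) * monomial (mdeg mo f) 1 * g) =
      lT mo g * f - lT mo f * g := by
    rw [mf, mg, ← e1, ← e2]; ring
  exact ⟨by linear_combination key, by linear_combination key⟩
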